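/- Let G be a connected simple graph with n vertices, m edges and cyclomatic number γ = m − n + 1. Suppose G has no vertex of degree 1 and 0 < nᵢ < n for some i with 3 ≤ i ≤ n − 1, where nᵢ is the number of vertices of degree i. Then the number m_{i,i} of edges joining two vertices of degree i satisfies m_{i,i} ≤ nᵢ − 2 + γ. -/

import Mathlib

open Finset

/-- Number of vertices of degree `i` in `G`. -/
def nDeg {V : Type*} [Fintype V] (G : SimpleGraph V) [DecidableRel G.Adj] (i : ℕ) : ℕ :=
  (Finset.univ.filter (fun v => G.degree v = i)).card

open scoped Classical in
/-- Number of edges of `G` joining a vertex of degree `i` with a vertex of degree `j`. -/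
noncomputable def mEdges {V : Type*} [Fintype V] [DecidableEq V] (G : SimpleGraph V)
    [DecidableRel G.Adj] (i j : ℕ) : ℕ :=
  (G.edgeFinset.filter
    (fun e => ∃ u v, e = s(u, v) ∧ G.degree u = i ∧ G.degree v = j)).card

/-- The Randić index of a graph. -/
noncomputable def randic {V : Type*} [Fintype V] [DecidableEq V] (G : SimpleGraph V)
    [DecidableRel G.Adj] : ℝ :=
  ∑ e ∈ G.edgeFinset,
    Sym2.lift ⟨fun u v => 1 / Real.sqrt ((G.degree u : ℝ) * (G.degree v : ℝ)),
      fun u v => by simp [mul_comm]⟩ e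

theorem stmt_12 {V : Type*} [Fintype V] [DecidableEq V] (G : SimpleGraph V) [DecidableRel G.Adj]
    (n m γ : ℕ) (hconn : G.Connected) (hn : Fintype.card V = n)
    (hm : G.edgeFinset.card = m) (hγ : (γ : ℤ) = (m : ℤ) - n + 1)
    (h1 : nDeg G 1 = 0) (i : ℕ) (hi3 : 3 ≤ i) (hin : i ≤ n - 1)
    (hpos : 0 < nDeg G i) (hlt : nDeg G i < n) :
    (mEdges G i i : ℤ) ≤ (nDeg G i : ℤ) - 2 + γ := by
  classical
  -- helper: walk from a vertex of degree i to a vertex of degree ≠ i crosses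
  have cross : ∀ {u v : V} (p : G.Walk u v), G.degree u = i → G.degree v ≠ i →
      ∃ a b, G.Adj a b ∧ G.degree a = i ∧ G.degree b ≠ i := by
    intro u v p
    induction p with
    | nil => intro hu hv; exact absurd hu hv
    | @cons u w v h p ih =>
      intro hu hv
      by_cases hw : G.degree w = i
      · exact ih hw hv
      · exact ⟨u, w, h, hu, hw⟩
  have nbr : ∀ {u v : V} (p : G.Walk u v), u ≠ v → ∃ w, G.Adj u w := by
    intro u v p
    induction p with
    | nil => intro h; exact absurd rfl h
    | @cons u w v h p ih => intro _; exact ⟨w, h⟩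
  set A : Finset V := univ.filter (fun v => G.degree v = i) with hAdef
  set B : Finset V := Aᶜ with hBdef
  have hAcard : A.card = nDeg G i := rfl
  -- membership facts
  have hmemA : ∀ v, v ∈ A ↔ G.degree v = i := by
    intro v; simp [hAdef]
  have hmemB : ∀ v, v ∈ B ↔ G.degree v ≠ i := by
    intro v; simp [hBdef, hmemA]
  -- every vertex of B has degree ≥ 2
  have hApos : A.Nonempty := by
    rw [← Finset.card_pos, hAcard]; exact hpos
  have hBpos : B.Nonempty := by
    rw [hBdef, ← Finset.card_compl_lt_iff_nonempty, compl_compl, hAcard, hn]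
    exact hlt
  obtain ⟨a0, ha0⟩ := hApos
  have hdeg2 : ∀ v ∈ B, 2 ≤ G.degree v := by
    intro v hv
    have hne1 : G.degree v ≠ 1 := by
      intro h
      have : v ∈ univ.filter (fun v => G.degree v = 1) := by simp [h]
      have := Finset.card_pos.mpr ⟨v, this⟩
      rw [show (univ.filter (fun v => G.degree v = 1)).card = nDeg G 1 from rfl, h1] at this
      exact absurd this (lt_irrefl 0)
    have hne0 : G.degree v ≠ 0 := by
      intro h
      have hva : v ≠ a0 := by
        intro he; rw [hmemB] at hv; rw [he, (hmemA a0).mp ha0] at hv; exact hv rfl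
      obtain ⟨w, hw⟩ := nbr ((hconn.preconnected v a0).some) hva
      have : 0 < G.degree v := (G.degree_pos_iff_exists_adj v).mpr ⟨w, hw⟩
      omega
    omega
  -- weight of an edge: number of endpoints in B
  set w : Sym2 V → ℕ := fun e => (B.filter (fun v => v ∈ e)).card with hwdef
  -- sum of degrees over B equals sum of weights over all edges
  have hsum : ∑ v ∈ B, G.degree v = ∑ e ∈ G.edgeFinset, w e := by
    have h1 : ∀ v, G.degree v = (G.edgeFinset.filter (fun e => v ∈ e)).card := by
      intro v
      rw [← SimpleGraph.card_incidenceFinset_eq_degree, G.incidenceFinset_eq_filter v]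
    calc ∑ v ∈ B, G.degree v
        = ∑ v ∈ B, ∑ e ∈ G.edgeFinset, (if v ∈ e then 1 else 0) := by
          refine Finset.sum_congr rfl fun v _ => ?_
          rw [h1 v, Finset.sum_boole]
          simp
      _ = ∑ e ∈ G.edgeFinset, ∑ v ∈ B, (if v ∈ e then 1 else 0) := Finset.sum_comm
      _ = ∑ e ∈ G.edgeFinset, w e := by
          refine Finset.sum_congr rfl fun e _ => ?_
          rw [Finset.sum_boole]
          simp [hwdef]
  -- split the edges
  set S : Finset (Sym2 V) :=
    G.edgeFinset.filter (fun e => ∃ u v, e = s(u, v) ∧ G.degree u = i ∧ G.degree v = i)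
    with hSdef
  set T : Finset (Sym2 V) :=
    G.edgeFinset.filter (fun e => ¬ ∃ u v, e = s(u, v) ∧ G.degree u = i ∧ G.degree v = i)
    with hTdef
  have hST : S.card + T.card = m := by
    rw [hSdef, hTdef, Finset.card_filter_add_card_filter_not, hm]
  have hScard : mEdges G i i = S.card := by
    rw [mEdges, hSdef]
  -- weight of edges in S is zero
  have hwSzero : ∀ e ∈ S, w e = 0 := by
    intro e he
    rw [hSdef, Finset.mem_filter] at he
    obtain ⟨a, b, rfl, ha, hb⟩ := he.2
    show (B.filter (fun v => v ∈ s(a, b))).card = 0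
    rw [Finset.card_eq_zero, Finset.filter_eq_empty_iff]
    intro v hv
    rw [Sym2.mem_iff]
    rintro (rfl | rfl)
    · exact (hmemB v).mp hv ha
    · exact (hmemB v).mp hv hb
  -- weight of each edge is at most 2
  have hwle2 : ∀ e ∈ G.edgeFinset, w e ≤ 2 := by
    intro e he
    induction e with
    | h a b =>
      show (B.filter (fun v => v ∈ s(a, b))).card ≤ 2
      calc (B.filter (fun v => v ∈ s(a, b))).card ≤ ({a, b} : Finset V).card := by
            apply Finset.card_le_card
            intro v hv
            rw [Finset.mem_filter, Sym2.mem_iff] at hv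
            simp [hv.2]
        _ ≤ 2 := Finset.card_insert_le _ _ |>.trans (by simp)
  -- weight of each edge in T is at least 1
  have hwT1 : ∀ e ∈ T, 1 ≤ w e := by
    intro e he
    rw [hTdef, Finset.mem_filter] at he
    obtain ⟨he1, he2⟩ := he
    induction e with
    | h a b =>
      have hadj : G.Adj a b := by rwa [SimpleGraph.mem_edgeFinset, SimpleGraph.mem_edgeSet] at he1
      have : G.degree a ≠ i ∨ G.degree b ≠ i := by
        by_contra hc
        push_neg at hc
        exact he2 ⟨a, b, rfl, hc.1, hc.2⟩
      show 1 ≤ (B.filter (fun v => v ∈ s(a, b))).card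
      rw [Nat.succ_le_iff, Finset.card_pos]
      rcases this with h | h
      · exact ⟨a, by rw [Finset.mem_filter, hmemB]; exact ⟨h, by simp⟩⟩
      · exact ⟨b, by rw [Finset.mem_filter, hmemB]; exact ⟨h, by simp⟩⟩
  -- existence of a crossing edge of weight exactly 1
  obtain ⟨b0, hb0⟩ := hBpos
  have hab : G.degree a0 = i := (hmemA a0).mp ha0
  have hbb : G.degree b0 ≠ i := (hmemB b0).mp hb0
  obtain ⟨x, y, hxy, hx, hy⟩ := cross ((hconn.preconnected a0 b0).some) hab hbb
  have he0T : s(x, y) ∈ T := by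
    rw [hTdef, Finset.mem_filter]
    refine ⟨SimpleGraph.mem_edgeFinset.mpr hxy, ?_⟩
    rintro ⟨u, v, huv, hu, hv⟩
    rw [Sym2.eq_iff] at huv
    rcases huv with ⟨rfl, rfl⟩ | ⟨rfl, rfl⟩
    · exact hy hv
    · exact hy hu
  have hwe0 : w s(x, y) = 1 := by
    show (B.filter (fun v => v ∈ s(x, y))).card = 1
    have : B.filter (fun v => v ∈ s(x, y)) = {y} := by
      ext v
      rw [Finset.mem_filter, hmemB, Sym2.mem_iff, Finset.mem_singleton]
      constructor
      · rintro ⟨hv, rfl | rfl⟩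
        · exact absurd hx hv
        · rfl
      · rintro rfl; exact ⟨hy, Or.inr rfl⟩
    rw [this, Finset.card_singleton]
  -- main counting: 2 * B.card ≤ ∑ w over T ≤ 2 * T.card - 1
  have hsumT : ∑ v ∈ B, G.degree v = ∑ e ∈ T, w e := by
    rw [hsum]
    rw [← Finset.sum_filter_add_sum_filter_not G.edgeFinset
      (fun e => ∃ u v, e = s(u, v) ∧ G.degree u = i ∧ G.degree v = i) w]
    rw [Finset.sum_eq_zero hwSzero, zero_add]
  have hlow : 2 * B.card ≤ ∑ e ∈ T, w e := by
    rw [← hsumT]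
    calc 2 * B.card = ∑ _v ∈ B, 2 := by rw [Finset.sum_const, smul_eq_mul, mul_comm]
      _ ≤ ∑ v ∈ B, G.degree v := Finset.sum_le_sum hdeg2
  have hhigh : ∑ e ∈ T, w e + 1 ≤ 2 * T.card := by
    have hsplit : ∑ e ∈ T, w e = w s(x, y) + ∑ e ∈ T.erase s(x, y), w e := by
      rw [Finset.add_sum_erase _ _ he0T]
    have hTsub : ∀ e ∈ T.erase s(x, y), w e ≤ 2 := by
      intro e he
      have := Finset.mem_of_mem_erase he
      rw [hTdef, Finset.mem_filter] at this
      exact hwle2 e this.1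
    calc ∑ e ∈ T, w e + 1 = w s(x, y) + ∑ e ∈ T.erase s(x, y), w e + 1 := by rw [hsplit]
      _ ≤ 1 + 2 * (T.erase s(x, y)).card + 1 := by
          have : ∑ e ∈ T.erase s(x, y), w e ≤ 2 * (T.erase s(x, y)).card := by
            calc ∑ e ∈ T.erase s(x, y), w e ≤ ∑ _e ∈ T.erase s(x, y), 2 :=
                Finset.sum_le_sum hTsub
              _ = 2 * (T.erase s(x, y)).card := by rw [Finset.sum_const, smul_eq_mul, mul_comm]
          omega
      _ = 2 * ((T.erase s(x, y)).card + 1) := by ring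
      _ = 2 * T.card := by rw [Finset.card_erase_add_one he0T]
  have hTB : B.card + 1 ≤ T.card := by omega
  -- put it together
  have hBcard : (B.card : ℤ) = (n : ℤ) - A.card := by
    rw [hBdef, Finset.card_compl, hn]
    have : A.card ≤ n := by rw [hAcard]; omega
    push_cast [Nat.cast_sub this]
    omega
  have hm' : (m : ℤ) = S.card + T.card := by exact_mod_cast hST.symm
  rw [hγ, hm', ← hScard, ← hAcard]
  have hTB' : (B.card : ℤ) + 1 ≤ T.card := by exact_mod_cast hTB
  omega
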